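/- Let (x_i, f_i) be a Schauder frame of a Banach space X. Then the set X_0 = { x ∈ X : sup{ |f(x)| : f ∈ span(f_i : i ≥ n), ‖f‖ ≤ 1 } → 0 as n → ∞ } is a norm-closed linear subspace of X. Moreover, if the frame is locally boundedly complete, then X_0 = X. -/
import Mathlib


open Filter Topology

/-- The quantity `sup { |g v| : g ∈ span (f i : i ≥ n), ‖g‖ ≤ 1 }`, i.e. the norm of the
restriction of (evaluation at) `v` to the span of the tail `(f i)_{i ≥ n}`. -/
noncomputable def tailSupF {X : Type*} [NormedAddCommGroup X] [NormedSpace ℝ X]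
    (f : ℕ → X →L[ℝ] ℝ) (v : X) (n : ℕ) : ℝ :=
  sSup ((fun g : X →L[ℝ] ℝ => |g v|) ''
    {g | g ∈ Submodule.span ℝ (f '' {i | n ≤ i}) ∧ ‖g‖ ≤ 1})

section TailSupLemmas

variable {X : Type*} [NormedAddCommGroup X] [NormedSpace ℝ X] (f : ℕ → X →L[ℝ] ℝ)

private lemma tailSet_zero_mem (n : ℕ) :
    (0 : X →L[ℝ] ℝ) ∈ {g : X →L[ℝ] ℝ | g ∈ Submodule.span ℝ (f '' {i | n ≤ i}) ∧ ‖g‖ ≤ 1} :=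
  ⟨Submodule.zero_mem _, by simp⟩

private lemma tailSet_bddAbove (v : X) (n : ℕ) :
    BddAbove ((fun g : X →L[ℝ] ℝ => |g v|) ''
      {g | g ∈ Submodule.span ℝ (f '' {i | n ≤ i}) ∧ ‖g‖ ≤ 1}) := by
  refine ⟨‖v‖, ?_⟩
  rintro y ⟨g, ⟨-, hg⟩, rfl⟩
  calc |g v| = ‖g v‖ := rfl
    _ ≤ ‖g‖ * ‖v‖ := g.le_opNorm v
    _ ≤ 1 * ‖v‖ := by gcongr
    _ = ‖v‖ := one_mul _

private lemma tailSupF_nonneg (v : X) (n : ℕ) : 0 ≤ tailSupF f v n := by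
  refine le_csSup (tailSet_bddAbove f v n) ⟨0, tailSet_zero_mem f n, by simp⟩

private lemma apply_le_tailSupF {v : X} {n : ℕ} {g : X →L[ℝ] ℝ}
    (hg : g ∈ Submodule.span ℝ (f '' {i | n ≤ i})) (hg1 : ‖g‖ ≤ 1) :
    |g v| ≤ tailSupF f v n :=
  le_csSup (tailSet_bddAbove f v n) ⟨g, ⟨hg, hg1⟩, rfl⟩

private lemma tailSupF_le_norm (v : X) (n : ℕ) : tailSupF f v n ≤ ‖v‖ := by
  refine csSup_le ⟨0, ⟨0, tailSet_zero_mem f n, by simp⟩⟩ ?_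
  rintro y ⟨g, ⟨-, hg⟩, rfl⟩
  calc |g v| = ‖g v‖ := rfl
    _ ≤ ‖g‖ * ‖v‖ := g.le_opNorm v
    _ ≤ 1 * ‖v‖ := by gcongr
    _ = ‖v‖ := one_mul _

private lemma tailSupF_add_le (v w : X) (n : ℕ) :
    tailSupF f (v + w) n ≤ tailSupF f v n + tailSupF f w n := by
  refine csSup_le ⟨0, ⟨0, tailSet_zero_mem f n, by simp⟩⟩ ?_
  rintro y ⟨g, hg, rfl⟩
  calc |g (v + w)| = |g v + g w| := by rw [map_add]
    _ ≤ |g v| + |g w| := abs_add_le _ _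
    _ ≤ tailSupF f v n + tailSupF f w n :=
        add_le_add (apply_le_tailSupF f hg.1 hg.2) (apply_le_tailSupF f hg.1 hg.2)

private lemma tailSupF_smul_le (c : ℝ) (v : X) (n : ℕ) :
    tailSupF f (c • v) n ≤ |c| * tailSupF f v n := by
  refine csSup_le ⟨0, ⟨0, tailSet_zero_mem f n, by simp⟩⟩ ?_
  rintro y ⟨g, hg, rfl⟩
  calc |g (c • v)| = |c| * |g v| := by rw [map_smul]; simp [abs_mul]
    _ ≤ |c| * tailSupF f v n := by
        exact mul_le_mul_of_nonneg_left (apply_le_tailSupF f hg.1 hg.2) (abs_nonneg c)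

private lemma tailSupF_lip (v w : X) (n : ℕ) :
    tailSupF f v n ≤ tailSupF f w n + ‖v - w‖ := by
  refine csSup_le ⟨0, ⟨0, tailSet_zero_mem f n, by simp⟩⟩ ?_
  rintro y ⟨g, hg, rfl⟩
  have h1 : |g (v - w)| ≤ ‖v - w‖ := by
    calc |g (v - w)| = ‖g (v - w)‖ := rfl
      _ ≤ ‖g‖ * ‖v - w‖ := g.le_opNorm _
      _ ≤ 1 * ‖v - w‖ := by gcongr; exact hg.2
      _ = ‖v - w‖ := one_mul _
  have hvw : v = w + (v - w) := by abel
  calc |g v| = |g w + g (v - w)| := by rw [← map_add, ← hvw]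
    _ ≤ |g w| + |g (v - w)| := abs_add_le _ _
    _ ≤ tailSupF f w n + ‖v - w‖ := add_le_add (apply_le_tailSupF f hg.1 hg.2) h1

end TailSupLemmas

/-- Let `(x i, f i)` be a Schauder frame of a Banach space `X`. Then
`X₀ = { v : ‖v‖ restricted to span (f i : i ≥ n) → 0 }` is a norm-closed linear subspace
of `X`; moreover, if the frame is locally boundedly complete then `X₀ = X`. -/
theorem schauderFrame_X0_closed_subspace
    {X : Type*} [NormedAddCommGroup X] [NormedSpace ℝ X] [CompleteSpace X]
    (x : ℕ → X) (f : ℕ → X →L[ℝ] ℝ)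
    (hx : ∀ i, x i ≠ 0) (hf : ∀ i, f i ≠ 0)
    (hframe : ∀ v : X,
      Tendsto (fun n => ∑ i ∈ Finset.range n, f i v • x i) atTop (𝓝 v)) :
    (∃ X₀ : Submodule ℝ X, IsClosed (X₀ : Set X) ∧
      ∀ v : X, v ∈ X₀ ↔ Tendsto (tailSupF f v) atTop (𝓝 0)) ∧
    ((∀ m : ℕ, Tendsto (tailSupF f (x m)) atTop (𝓝 0)) →
      ∀ v : X, Tendsto (tailSupF f v) atTop (𝓝 0)) := by
  set X₀ : Submodule ℝ X :=
    { carrier := {v | Tendsto (tailSupF f v) atTop (𝓝 0)}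
      zero_mem' := by
        show Tendsto (tailSupF f (0 : X)) atTop (𝓝 0)
        have h : tailSupF f (0 : X) = fun _ => 0 := funext fun n =>
          le_antisymm (by simpa using tailSupF_le_norm f 0 n) (tailSupF_nonneg f 0 n)
        rw [h]
        exact tendsto_const_nhds
      add_mem' := by
        intro v w hv hw
        have h0 : Tendsto (fun n => tailSupF f v n + tailSupF f w n) atTop (𝓝 (0 + 0)) :=
          hv.add hw
        rw [add_zero] at h0
        exact squeeze_zero (fun n => tailSupF_nonneg f _ n)
          (fun n => tailSupF_add_le f v w n) h0
      smul_mem' := by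
        intro c v hv
        have h0 : Tendsto (fun n => |c| * tailSupF f v n) atTop (𝓝 (|c| * 0)) :=
          hv.const_mul _
        rw [mul_zero] at h0
        exact squeeze_zero (fun n => tailSupF_nonneg f _ n)
          (fun n => tailSupF_smul_le f c v n) h0 } with hX₀def
  have hclosed : IsClosed (X₀ : Set X) := by
    refine IsSeqClosed.isClosed ?_
    intro u v hu huv
    show Tendsto (tailSupF f v) atTop (𝓝 0)
    rw [Metric.tendsto_atTop] at huv ⊢
    intro ε hε
    obtain ⟨k, hk⟩ := huv (ε / 2) (by linarith)
    have hk' := hk k le_rfl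
    have huk : Tendsto (tailSupF f (u k)) atTop (𝓝 0) := hu k
    rw [Metric.tendsto_atTop] at huk
    obtain ⟨N, hN⟩ := huk (ε / 2) (by linarith)
    refine ⟨N, fun n hn => ?_⟩
    have h1 : tailSupF f v n ≤ tailSupF f (u k) n + ‖v - u k‖ := tailSupF_lip f v (u k) n
    have h2 : tailSupF f (u k) n < ε / 2 := by
      have := hN n hn
      rw [Real.dist_eq, sub_zero] at this
      exact lt_of_le_of_lt (le_abs_self _) this
    have h3 : ‖v - u k‖ < ε / 2 := by
      have : dist (u k) v < ε / 2 := hk' 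
      rwa [dist_eq_norm, ← norm_neg, neg_sub] at this
    rw [Real.dist_eq, sub_zero, abs_of_nonneg (tailSupF_nonneg f v n)]
    linarith
  refine ⟨⟨X₀, hclosed, fun v => Iff.rfl⟩, ?_⟩
  intro hloc v
  have hmem : ∀ n, (∑ i ∈ Finset.range n, f i v • x i) ∈ X₀ := fun n =>
    Submodule.sum_mem _ fun i _ => Submodule.smul_mem _ _ (hloc i)
  exact hclosed.mem_of_tendsto (hframe v) (Filter.Eventually.of_forall hmem)
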